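/- arXiv:2004.03914 — 3 statements merged into one kernel-verified Lean document; each statement's English description precedes it below -/
import Mathlib

section
/- Let Γ be a finite simple connected triangle-free graph with more than one vertex. Then either Γ is a complete bipartite graph, or Γ contains the 3-path graph (path on 4 vertices) as a full (induced) subgraph. -/
open SimpleGraph

lemma mkP4 {V : Type} (G : SimpleGraph V) (a b c d : V)
    (hab : G.Adj a b) (hbc : G.Adj b c) (hcd : G.Adj c d)
    (hac : ¬G.Adj a c) (had : ¬G.Adj a d) (hbd : ¬G.Adj b d)
    (hac' : a ≠ c) (had' : a ≠ d) (hbd' : b ≠ d) :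
    Nonempty (SimpleGraph.pathGraph 4 ↪g G) := by
  have hab' := hab.ne
  have hbc' := hbc.ne
  have hcd' := hcd.ne
  have hba := hab.symm
  have hcb := hbc.symm
  have hdc := hcd.symm
  have hca : ¬G.Adj c a := fun h => hac h.symm
  have hda : ¬G.Adj d a := fun h => had h.symm
  have hdb : ¬G.Adj d b := fun h => hbd h.symm
  refine ⟨⟨⟨![a,b,c,d], ?_⟩, ?_⟩⟩
  · intro i j hij
    fin_cases i <;> fin_cases j <;> simp_all
  · intro i j
    fin_cases i <;> fin_cases j <;>
      simp_all [SimpleGraph.pathGraph_adj] <;> assumption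

/-- A finite simple connected triangle-free graph with more than one
vertex is either complete bipartite or contains an induced path on 4 vertices. -/
theorem stmt_0 {V : Type} [Fintype V] (G : SimpleGraph V)
    (hconn : G.Connected) (htf : G.CliqueFree 3) (hcard : 1 < Fintype.card V) :
    (∃ W B : Set V, W.Nonempty ∧ B.Nonempty ∧
        (∀ v, (v ∈ W ∨ v ∈ B) ∧ ¬(v ∈ W ∧ v ∈ B)) ∧
        (∀ u w, G.Adj u w ↔ ((u ∈ W ∧ w ∈ B) ∨ (u ∈ B ∧ w ∈ W)))) ∨
      Nonempty (SimpleGraph.pathGraph 4 ↪g G) := by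
  classical
  by_cases hP4 : Nonempty (SimpleGraph.pathGraph 4 ↪g G)
  · exact Or.inr hP4
  left
  have tri : ∀ x y z : V, G.Adj x y → G.Adj x z → G.Adj y z → False := by
    intro x y z h1 h2 h3
    exact htf {x, y, z} (SimpleGraph.is3Clique_triple_iff.mpr ⟨h1, h2, h3⟩)
  obtain ⟨u0, v0, huv0⟩ := Fintype.exists_pair_of_one_lt_card hcard
  have hedge : ∃ a b : V, G.Adj a b := by
    obtain ⟨p⟩ := hconn.preconnected u0 v0
    cases p with
    | nil => exact absurd rfl huv0
    | cons h _ => exact ⟨_, _, h⟩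
  obtain ⟨a, b, hab⟩ := hedge
  have step : ∀ u y, (G.Adj a u ∨ G.Adj b u) → G.Adj u y →
      (G.Adj a y ∨ G.Adj b y) := by
    intro u y hu huy
    by_contra h
    push_neg at h
    obtain ⟨hay, hby⟩ := h
    rcases hu with hu | hu
    · have hbu : ¬ G.Adj b u := fun h' => tri a b u hab hu h'
      refine hP4 (mkP4 G b a u y hab.symm hu huy hbu hby hay ?_ ?_ ?_)
      · rintro rfl; exact hby huy
      · rintro rfl; exact hay hab
      · rintro rfl; exact hby hab.symm
    · have hau : ¬ G.Adj a u := fun h' => tri a b u hab h' hu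
      refine hP4 (mkP4 G a b u y hab hu huy hau hay hby ?_ ?_ ?_)
      · rintro rfl; exact hay huy
      · rintro rfl; exact hby hab.symm
      · rintro rfl; exact hay hab
  have key : ∀ u x (q : G.Walk u x), (G.Adj a u ∨ G.Adj b u) →
      (G.Adj a x ∨ G.Adj b x) := by
    intro u x q
    induction q with
    | nil => exact id
    | cons h q ih => exact fun hu => ih (step _ _ hu h)
  have cover : ∀ x, G.Adj a x ∨ G.Adj b x := by
    intro x
    obtain ⟨q⟩ := hconn.preconnected a x
    exact key a x q (Or.inr hab.symm)
  have cross : ∀ u w, G.Adj b u → G.Adj a w → G.Adj u w := by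
    intro u w hu hw
    by_contra huw
    by_cases hua : u = a
    · exact huw (hua ▸ hw)
    by_cases hwb : w = b
    · exact huw (hwb ▸ hu.symm)
    have hua' : ¬ G.Adj u a := fun h' => tri a b u hab h'.symm hu
    have hbw : ¬ G.Adj b w := fun h' => tri a b w hab hw h'
    refine hP4 (mkP4 G u b a w hu.symm hab.symm hw hua' huw hbw hua ?_ (fun h => hwb h.symm))
    rintro rfl; exact tri a b u hab hw hu
  refine ⟨{x | G.Adj b x}, {x | G.Adj a x}, ⟨a, hab.symm⟩, ⟨b, hab⟩, ?_, ?_⟩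
  · intro v
    constructor
    · exact (cover v).symm
    · rintro ⟨h1, h2⟩
      exact tri a b v hab h2 h1
  · intro u w
    constructor
    · intro h
      rcases cover u with hu | hu
      · rcases cover w with hw | hw
        · exact (tri a u w hu hw h).elim
        · exact Or.inr ⟨hu, hw⟩
      · rcases cover w with hw | hw
        · exact Or.inl ⟨hu, hw⟩
        · exact (tri b u w hu hw h).elim
    · rintro (⟨hu, hw⟩ | ⟨hu, hw⟩)
      · exact cross u w hu hw
      · exact (cross w u hw hu).symm
end

section
/- For odd m ≥ 3, the quotient of the dihedral Artin–Tits group A_m = ⟨s, t | stst⋯ = tsts⋯ (both sides of length m)⟩ by its center is isomorphic to the free product ℤ/mℤ * ℤ/2ℤ. -/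
/-- The alternating word s t s t ⋯ of given length in the free group. -/
def altWord {V : Type} : V → V → ℕ → FreeGroup V
  | _, _, 0 => 1
  | s, t, n + 1 => FreeGroup.of s * altWord t s n

/-- The Artin relations for an edge-labeling `m` (where `m s t = 0` or `1`
means no edge, and a label `m s t ≥ 2` imposes the braid relation). -/
def artinRels {V : Type} (m : V → V → ℕ) : Set (FreeGroup V) :=
  { r | ∃ s t : V, 2 ≤ m s t ∧ r = altWord s t (m s t) * (altWord t s (m s t))⁻¹ }

/-- The Artin–Tits group of an edge-labeled graph, encoded by its labeling. -/
abbrev ArtinGroup {V : Type} (m : V → V → ℕ) : Type := PresentedGroup (artinRels m)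

/-- The labeling of a single edge (on vertex set `Bool`) with label `m`. -/
def dihedralLabel (m : ℕ) : Bool → Bool → ℕ :=
  fun a b => if a = b then 0 else m

/-- Alternating products in a group. -/
def altG {G : Type*} [Group G] : G → G → ℕ → G
  | _, _, 0 => 1
  | a, b, n + 1 => a * altG b a n

section AltG
variable {G H : Type*} [Group G] [Group H]

theorem altG_zero (a b : G) : altG a b 0 = 1 := rfl
theorem altG_succ (a b : G) (n : ℕ) : altG a b (n+1) = a * altG b a n := rfl

theorem map_altG (f : G →* H) : ∀ (n : ℕ) (a b : G), f (altG a b n) = altG (f a) (f b) n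
  | 0, a, b => by simp [altG_zero]
  | n+1, a, b => by rw [altG_succ, map_mul, map_altG f n b a, altG_succ]

theorem map_altWord' {V : Type} (φ : FreeGroup V →* G) :
    ∀ (n : ℕ) (s t : V), φ (altWord s t n) = altG (φ (FreeGroup.of s)) (φ (FreeGroup.of t)) n
  | 0, _, _ => by simp [altWord, altG_zero]
  | n+1, s, t => by
      show φ (FreeGroup.of s * altWord t s n) = _
      rw [map_mul, map_altWord' φ n t s, altG_succ]

theorem mul_pow_shuffle (a b : G) : ∀ n : ℕ, (a*b)^n * a = a * (b*a)^n
  | 0 => by simp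
  | n+1 => by
      calc (a*b)^(n+1) * a = (a*b) * ((a*b)^n * a) := by rw [pow_succ']; group
      _ = (a*b) * (a * (b*a)^n) := by rw [mul_pow_shuffle a b n]
      _ = a * (b*a)^(n+1) := by rw [pow_succ']; simp [mul_assoc]

theorem altG_even (a b : G) : ∀ n : ℕ, altG a b (2*n) = (a*b)^n
  | 0 => by simp [altG_zero]
  | n+1 => by
      have h1 : 2*(n+1) = (2*n+1)+1 := by ring
      rw [h1, altG_succ, altG_succ, altG_even a b n, pow_succ', ← mul_assoc]

theorem altG_odd (a b : G) (n : ℕ) : altG a b (2*n+1) = (a*b)^n * a := by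
  rw [altG_succ, altG_even b a n, mul_pow_shuffle]

theorem altG_of_sq (k : ℕ) {x y : G} (h : x ^ (2*k+1) = y ^ 2) :
    altG ((x^k)⁻¹ * y) (y⁻¹ * x^(k+1)) (2*k+1) = y ∧
    altG (y⁻¹ * x^(k+1)) ((x^k)⁻¹ * y) (2*k+1) = y := by
  have hab : ((x^k)⁻¹ * y) * (y⁻¹ * x^(k+1)) = x := by
    rw [pow_succ]; group
  have hba : (y⁻¹ * x^(k+1)) * ((x^k)⁻¹ * y) = y⁻¹ * x * (y⁻¹)⁻¹ := by
    rw [pow_succ]; group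
  constructor
  · rw [altG_odd, hab]; group
  · rw [altG_odd, hba, conj_pow]
    calc y⁻¹ * x^k * (y⁻¹)⁻¹ * (y⁻¹ * x^(k+1)) = y⁻¹ * x^(2*k+1) := by
          rw [show 2*k+1 = k + (k+1) by ring, pow_add]; group
    _ = y := by rw [h]; group

end AltG

open Monoid Monoid.CoprodI

section CoprodICenter

theorem word_prod_injective {ι : Type*} (M : ι → Type*) [∀ i, Group (M i)] :
    Function.Injective (Word.prod : Word M → CoprodI M) := by
  classical
  have hli : ∀ x : CoprodI M, Word.prod (Word.equiv x) = x := fun x => by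
    show Word.prod (x • Word.empty) = x
    rw [Word.prod_smul, Word.prod_empty, mul_one]
  have hri : ∀ w : Word M, Word.equiv (Word.prod w) = w := fun w => by
    obtain ⟨x, rfl⟩ := Word.equiv.surjective w
    rw [hli]
  intro w1 w2 h
  rw [← hri w1, h, hri w2]

theorem neword_prod_eq_idx {ι : Type*} {M : ι → Type*} [∀ i, Group (M i)]
    {i₁ j₁ i₂ j₂ : ι} (A : NeWord M i₁ j₁) (B : NeWord M i₂ j₂)
    (h : A.prod = B.prod) : i₁ = i₂ ∧ j₁ = j₂ := by
  have hw : A.toWord = B.toWord := word_prod_injective M h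
  have hlist : A.toList = B.toList := congrArg Word.toList hw
  constructor
  · have h1 := A.toList_head?
    have h2 := B.toList_head?
    rw [hlist, h2] at h1
    exact (Sigma.mk.inj_iff.mp (Option.some.inj h1)).1.symm
  · have h1 := A.toList_getLast?
    have h2 := B.toList_getLast?
    rw [hlist, h2] at h1
    exact (Sigma.mk.inj_iff.mp (Option.some.inj h1)).1.symm

theorem coprodI_bool_center_eq_bot (M : Bool → Type*) [∀ b, Group (M b)]
    [Nontrivial (M true)]
    (hbig : ∀ a : M false, ∃ x : M false, x ≠ 1 ∧ a * x ≠ 1) :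
    Subgroup.center (CoprodI M) = ⊥ := by
  classical
  rw [eq_bot_iff]
  intro c hc
  rw [Subgroup.mem_bot]
  by_contra hc1
  have hcomm : ∀ g : CoprodI M, g * c = c * g := fun g => Subgroup.mem_center_iff.mp hc g
  have hwprod : Word.prod (Word.equiv c) = c := by
    show Word.prod (c • Word.empty) = c
    rw [Word.prod_smul, Word.prod_empty, mul_one]
  have hwne : Word.equiv c ≠ Word.empty := fun h => hc1 (by rw [← hwprod, h, Word.prod_empty])
  obtain ⟨i, j, w', hw'⟩ := NeWord.of_word (Word.equiv c) hwne
  have hprod : w'.prod = c := by rw [NeWord.prod, hw', hwprod]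
  obtain ⟨x0, hx0, _⟩ := hbig 1
  haveI : Nontrivial (M false) := ⟨⟨x0, 1, hx0⟩⟩
  by_cases hij : i = j
  · subst hij
    haveI : Nontrivial (M (!i)) := by
      cases i
      · exact inferInstanceAs (Nontrivial (M true))
      · exact inferInstanceAs (Nontrivial (M false))
    obtain ⟨g, hg⟩ := exists_ne (1 : M (!i))
    have hne : (!i) ≠ i := Bool.not_ne_self i
    have hA : (NeWord.append (NeWord.singleton g hg) hne w').prod
        = (NeWord.append w' (Ne.symm hne) (NeWord.singleton g hg)).prod := by
      rw [NeWord.append_prod, NeWord.append_prod, NeWord.prod_singleton, hprod, hcomm]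
    exact hne (neword_prod_eq_idx _ _ hA).1
  · -- i ≠ j
    -- helper for the "big group at head" case
    cases i <;> cases j
    · exact hij rfl
    · -- i = false, j = true : big group at head
      obtain ⟨y, hy1, hy2⟩ := hbig w'.head
      have hy3 : y * w'.head ≠ 1 := fun h => hy2 (by
        rw [eq_inv_of_mul_eq_one_left h]; simp)
      have hA : (NeWord.mulHead w' y hy3).prod
          = (NeWord.append w' (Ne.symm hij) (NeWord.singleton y hy1)).prod := by
        rw [NeWord.mulHead_prod, NeWord.append_prod, NeWord.prod_singleton, hprod, hcomm]
      exact hij (neword_prod_eq_idx _ _ hA).2.symm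
    · -- i = true, j = false : big group at last
      obtain ⟨x, hx1, hx2⟩ := hbig w'.last
      have hninv : x⁻¹ * w'.inv.head ≠ 1 := by
        rw [NeWord.inv_head]
        intro h
        exact hx2 (by rw [← mul_inv_rev] at h; exact inv_eq_one.mp h)
      have hA : (NeWord.append (NeWord.singleton x hx1) (Ne.symm hij) w').inv.prod
          = (NeWord.mulHead w'.inv x⁻¹ hninv).prod := by
        have hcx : (CoprodI.of x * c)⁻¹ = CoprodI.of x⁻¹ * c⁻¹ := by
          rw [hcomm (CoprodI.of x), mul_inv_rev, map_inv]
        rw [NeWord.inv_prod, NeWord.append_prod, NeWord.prod_singleton, hprod,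
          NeWord.mulHead_prod, NeWord.inv_prod, hprod, hcx]
      exact hij (neword_prod_eq_idx _ _ hA).2.symm
    · exact hij rfl

end CoprodICenter

open Monoid

section Transfer
variable {G H : Type*} [Group G] [Group H]

theorem map_center_mulEquiv (e : G ≃* H) :
    (Subgroup.center G).map e.toMonoidHom = Subgroup.center H := by
  ext h
  simp only [Subgroup.mem_map]
  constructor
  · rintro ⟨g, hg, rfl⟩
    rw [Subgroup.mem_center_iff]
    intro x
    have := Subgroup.mem_center_iff.mp hg (e.symm x)
    calc x * e.toMonoidHom g = e (e.symm x * g) := by simp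
    _ = e (g * e.symm x) := by rw [← this]
    _ = e.toMonoidHom g * x := by simp
  · intro hh
    refine ⟨e.symm h, ?_, by simp⟩
    rw [Subgroup.mem_center_iff]
    intro x
    have := Subgroup.mem_center_iff.mp hh (e x)
    calc x * e.symm h = e.symm (e x * h) := by simp
    _ = e.symm (h * e x) := by rw [← this]
    _ = e.symm h * x := by simp

theorem center_eq_bot_of_mulEquiv (e : G ≃* H)
    (h : Subgroup.center H = ⊥) : Subgroup.center G = ⊥ := by
  rw [eq_bot_iff]
  intro c hc
  rw [Subgroup.mem_bot]
  have : e c ∈ Subgroup.center H := by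
    rw [← map_center_mulEquiv e]
    exact Subgroup.mem_map_of_mem _ hc
  rw [h, Subgroup.mem_bot] at this
  have := congrArg e.symm this
  simpa using this

end Transfer

section ZModHom

/-- The homomorphism `ℤ/n → H` sending `1` to an element `h` with `h ^ n = 1`. -/
noncomputable def zmodHom {H : Type*} [Group H] (n : ℕ) (h : H) (hh : h ^ n = 1) :
    Multiplicative (ZMod n) →* H :=
  AddMonoidHom.toMultiplicativeLeft
    (ZMod.lift n ⟨zmultiplesHom (Additive H) (Additive.ofMul h), by
      simp only [zmultiplesHom_apply, natCast_zsmul, ← ofMul_pow, hh,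
        ofMul_one]⟩)

theorem zmodHom_intCast {H : Type*} [Group H] (n : ℕ) (h : H) (hh : h ^ n = 1) (z : ℤ) :
    zmodHom n h hh (Multiplicative.ofAdd ((z : ZMod n))) = h ^ z := by
  simp only [zmodHom, AddMonoidHom.coe_toMultiplicativeLeft, Function.comp_apply,
    toAdd_ofAdd, ZMod.lift_coe, zmultiplesHom_apply]
  rw [← ofMul_zpow]
  rfl

theorem zmodHom_one {H : Type*} [Group H] (n : ℕ) (h : H) (hh : h ^ n = 1) :
    zmodHom n h hh (Multiplicative.ofAdd (1 : ZMod n)) = h := by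
  have := zmodHom_intCast n h hh 1
  simpa using this

end ZModHom

section CoprodEquiv

variable (M N : Type) [Group M] [Group N]

/-- The family for `CoprodI` corresponding to a binary coproduct. -/
def pairFam : Bool → Type _ := fun b => cond b N M

instance : ∀ b, Group (pairFam M N b) := fun b => by cases b <;> (dsimp [pairFam]; infer_instance)

/-- The pair of inclusion homs. -/
def pairHoms : ∀ b, pairFam M N b →* Coprod M N := fun i =>
  Bool.rec (motive := fun b => pairFam M N b →* Coprod M N) Coprod.inl Coprod.inr i

/-- Binary coproduct as an indexed coproduct. -/
noncomputable def coprodEquivCoprodI : Coprod M N ≃* CoprodI (pairFam M N) := by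
  refine MonoidHom.toMulEquiv
    (Coprod.lift (CoprodI.of (M := pairFam M N) (i := false)) (CoprodI.of (M := pairFam M N) (i := true)))
    (CoprodI.lift (pairHoms M N)) ?_ ?_
  · apply Coprod.hom_ext
    · ext x
      simp only [MonoidHom.comp_apply, MonoidHom.id_apply, Coprod.lift_apply_inl]
      exact CoprodI.lift_of (pairHoms M N) (i := false) x
    · ext x
      simp only [MonoidHom.comp_apply, MonoidHom.id_apply, Coprod.lift_apply_inr]
      exact CoprodI.lift_of (pairHoms M N) (i := true) x
  · apply CoprodI.ext_hom
    intro i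
    cases i
    · ext x
      simp only [MonoidHom.comp_apply, MonoidHom.id_apply, CoprodI.lift_of]
      exact Coprod.lift_apply_inl _ _ x
    · ext x
      simp only [MonoidHom.comp_apply, MonoidHom.id_apply, CoprodI.lift_of]
      exact Coprod.lift_apply_inr _ _ x

end CoprodEquiv

namespace Stmt8

open Monoid

/-- Relation set for `⟨x, y ∣ xᵐ = y²⟩`. -/
def grels (m : ℕ) : Set (FreeGroup Bool) :=
  {FreeGroup.of false ^ m * (FreeGroup.of true ^ 2)⁻¹}

abbrev GG (m : ℕ) := PresentedGroup (grels m)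

theorem GG_rel (m : ℕ) :
    (PresentedGroup.of false : GG m) ^ m = (PresentedGroup.of true : GG m) ^ 2 := by
  have h : FreeGroup.of false ^ m * (FreeGroup.of true ^ 2)⁻¹
      ∈ Subgroup.normalClosure (grels m) := Subgroup.subset_normalClosure rfl
  have h3 : (PresentedGroup.mk (grels m))
      (FreeGroup.of false ^ m * (FreeGroup.of true ^ 2)⁻¹) = 1 :=
    (QuotientGroup.eq_one_iff _).mpr h
  rw [map_mul, map_inv, map_pow, map_pow] at h3
  exact mul_inv_eq_one.mp h3

theorem A_braid (m : ℕ) (hm : 2 ≤ m) :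
    altG (PresentedGroup.of false : ArtinGroup (dihedralLabel m)) (PresentedGroup.of true) m
      = altG (PresentedGroup.of true : ArtinGroup (dihedralLabel m))
          (PresentedGroup.of false) m := by
  have hmem : altWord false true m * (altWord true false m)⁻¹ ∈ artinRels (dihedralLabel m) :=
    ⟨false, true, by simpa [dihedralLabel] using hm, by simp [dihedralLabel]⟩
  have h3 : (PresentedGroup.mk (artinRels (dihedralLabel m)))
      (altWord false true m * (altWord true false m)⁻¹) = 1 :=
    (QuotientGroup.eq_one_iff _).mpr (Subgroup.subset_normalClosure hmem)
  rw [map_mul, map_inv, map_altWord', map_altWord'] at h3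
  exact mul_inv_eq_one.mp h3

theorem braid_sq {G : Type*} [Group G] (k : ℕ) {s t : G}
    (hb : altG s t (2*k+1) = altG t s (2*k+1)) :
    (s*t)^(2*k+1) = (altG s t (2*k+1))^2 := by
  rw [altG_odd, altG_odd] at hb
  rw [altG_odd, sq]
  nth_rewrite 2 [hb]
  rw [mul_pow_shuffle t s k]
  rw [show 2*k+1 = k+1+k by ring, pow_add, pow_succ]
  group

variable (k : ℕ)

/-- The hom `A → ⟨x,y ∣ xᵐ = y²⟩`, `s ↦ x⁻ᵏy`, `t ↦ y⁻¹xᵏ⁺¹`. -/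
noncomputable def φAG : ArtinGroup (dihedralLabel (2*k+1)) →* GG (2*k+1) :=
  PresentedGroup.toGroup
    (f := fun v => bif v
      then (PresentedGroup.of true : GG (2*k+1))⁻¹ * PresentedGroup.of false ^ (k+1)
      else ((PresentedGroup.of false : GG (2*k+1)) ^ k)⁻¹ * PresentedGroup.of true)
    (by
      rintro r ⟨s, t, hst, rfl⟩
      have hne : s ≠ t := fun h => by
        subst h; simp [dihedralLabel] at hst
      have hd : dihedralLabel (2*k+1) s t = 2*k+1 := if_neg hne
      obtain ⟨h1, h2⟩ := altG_of_sq k (GG_rel (2*k+1))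
      rw [hd, map_mul, map_inv, map_altWord', map_altWord', FreeGroup.lift_apply_of,
        FreeGroup.lift_apply_of]
      cases s <;> cases t
      · exact absurd rfl hne
      · show altG _ _ _ * (altG _ _ _)⁻¹ = 1
        rw [show (bif false then (PresentedGroup.of true : GG (2*k+1))⁻¹ *
              PresentedGroup.of false ^ (k+1)
            else ((PresentedGroup.of false : GG (2*k+1)) ^ k)⁻¹ * PresentedGroup.of true)
          = ((PresentedGroup.of false : GG (2*k+1)) ^ k)⁻¹ * PresentedGroup.of true from rfl]
        rw [show (bif true then (PresentedGroup.of true : GG (2*k+1))⁻¹ *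
              PresentedGroup.of false ^ (k+1)
            else ((PresentedGroup.of false : GG (2*k+1)) ^ k)⁻¹ * PresentedGroup.of true)
          = (PresentedGroup.of true : GG (2*k+1))⁻¹ * PresentedGroup.of false ^ (k+1) from rfl]
        rw [h1, h2, mul_inv_cancel]
      · show altG _ _ _ * (altG _ _ _)⁻¹ = 1
        rw [show (bif false then (PresentedGroup.of true : GG (2*k+1))⁻¹ *
              PresentedGroup.of false ^ (k+1)
            else ((PresentedGroup.of false : GG (2*k+1)) ^ k)⁻¹ * PresentedGroup.of true)
          = ((PresentedGroup.of false : GG (2*k+1)) ^ k)⁻¹ * PresentedGroup.of true from rfl]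
        rw [show (bif true then (PresentedGroup.of true : GG (2*k+1))⁻¹ *
              PresentedGroup.of false ^ (k+1)
            else ((PresentedGroup.of false : GG (2*k+1)) ^ k)⁻¹ * PresentedGroup.of true)
          = (PresentedGroup.of true : GG (2*k+1))⁻¹ * PresentedGroup.of false ^ (k+1) from rfl]
        rw [h1, h2, mul_inv_cancel]
      · exact absurd rfl hne)

/-- The hom `⟨x,y ∣ xᵐ = y²⟩ → A`, `x ↦ st`, `y ↦ Δ`. -/
noncomputable def ψGA (hk : 1 ≤ k) : GG (2*k+1) →* ArtinGroup (dihedralLabel (2*k+1)) :=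
  PresentedGroup.toGroup
    (f := fun v => bif v
      then altG (PresentedGroup.of false : ArtinGroup (dihedralLabel (2*k+1)))
        (PresentedGroup.of true) (2*k+1)
      else (PresentedGroup.of false : ArtinGroup (dihedralLabel (2*k+1)))
        * PresentedGroup.of true)
    (by
      rintro r hr
      rw [grels, Set.mem_singleton_iff] at hr
      subst hr
      rw [map_mul, map_inv, map_pow, map_pow, FreeGroup.lift_apply_of, FreeGroup.lift_apply_of]
      show (_ * _) ^ (2*k+1) * ((altG _ _ (2*k+1)) ^ 2)⁻¹ = 1
      rw [← braid_sq k (A_braid (2*k+1) (by omega)), mul_inv_cancel])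

theorem comp_ψφ (hk : 1 ≤ k) :
    (ψGA k hk).comp (φAG k) = MonoidHom.id _ := by
  apply PresentedGroup.ext
  intro x
  have hΔ : altG (PresentedGroup.of false : ArtinGroup (dihedralLabel (2*k+1)))
      (PresentedGroup.of true) (2*k+1)
      = ((PresentedGroup.of false : ArtinGroup (dihedralLabel (2*k+1)))
          * PresentedGroup.of true) ^ k * PresentedGroup.of false := altG_odd _ _ k
  cases x
  · show (ψGA k hk) ((φAG k) (PresentedGroup.of false)) = PresentedGroup.of false
    rw [show (φAG k) (PresentedGroup.of false)
        = ((PresentedGroup.of false : GG (2*k+1)) ^ k)⁻¹ * PresentedGroup.of true from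
      PresentedGroup.toGroup.of _]
    rw [map_mul, map_inv, map_pow]
    rw [show (ψGA k hk) (PresentedGroup.of false)
        = PresentedGroup.of false * PresentedGroup.of true from PresentedGroup.toGroup.of _]
    rw [show (ψGA k hk) (PresentedGroup.of true)
        = altG (PresentedGroup.of false) (PresentedGroup.of true) (2*k+1) from
      PresentedGroup.toGroup.of _]
    rw [hΔ]
    group
  · show (ψGA k hk) ((φAG k) (PresentedGroup.of true)) = PresentedGroup.of true
    rw [show (φAG k) (PresentedGroup.of true)
        = (PresentedGroup.of true : GG (2*k+1))⁻¹ * PresentedGroup.of false ^ (k+1) from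
      PresentedGroup.toGroup.of _]
    rw [map_mul, map_inv, map_pow]
    rw [show (ψGA k hk) (PresentedGroup.of false)
        = PresentedGroup.of false * PresentedGroup.of true from PresentedGroup.toGroup.of _]
    rw [show (ψGA k hk) (PresentedGroup.of true)
        = altG (PresentedGroup.of false) (PresentedGroup.of true) (2*k+1) from
      PresentedGroup.toGroup.of _]
    rw [hΔ]
    group

theorem comp_φψ (hk : 1 ≤ k) :
    (φAG k).comp (ψGA k hk) = MonoidHom.id _ := by
  apply PresentedGroup.ext
  intro x
  obtain ⟨h1, h2⟩ := altG_of_sq k (GG_rel (2*k+1))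
  cases x
  · show (φAG k) ((ψGA k hk) (PresentedGroup.of false)) = PresentedGroup.of false
    rw [show (ψGA k hk) (PresentedGroup.of false)
        = PresentedGroup.of false * PresentedGroup.of true from PresentedGroup.toGroup.of _]
    rw [map_mul]
    rw [show (φAG k) (PresentedGroup.of false)
        = ((PresentedGroup.of false : GG (2*k+1)) ^ k)⁻¹ * PresentedGroup.of true from
      PresentedGroup.toGroup.of _]
    rw [show (φAG k) (PresentedGroup.of true)
        = (PresentedGroup.of true : GG (2*k+1))⁻¹ * PresentedGroup.of false ^ (k+1) from
      PresentedGroup.toGroup.of _]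
    rw [pow_succ]
    group
  · show (φAG k) ((ψGA k hk) (PresentedGroup.of true)) = PresentedGroup.of true
    rw [show (ψGA k hk) (PresentedGroup.of true)
        = altG (PresentedGroup.of false) (PresentedGroup.of true) (2*k+1) from
      PresentedGroup.toGroup.of _]
    rw [map_altG]
    rw [show (φAG k) (PresentedGroup.of false)
        = ((PresentedGroup.of false : GG (2*k+1)) ^ k)⁻¹ * PresentedGroup.of true from
      PresentedGroup.toGroup.of _]
    rw [show (φAG k) (PresentedGroup.of true)
        = (PresentedGroup.of true : GG (2*k+1))⁻¹ * PresentedGroup.of false ^ (k+1) from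
      PresentedGroup.toGroup.of _]
    exact h1

/-- The change-of-generators isomorphism. -/
noncomputable def eAG (hk : 1 ≤ k) :
    ArtinGroup (dihedralLabel (2*k+1)) ≃* GG (2*k+1) :=
  MonoidHom.toMulEquiv (φAG k) (ψGA k hk) (comp_ψφ k hk) (comp_φψ k hk)


/-! ### The quotient map to `ℤ/m * ℤ/2` -/

/-- Target free product. -/
abbrev QQ (k : ℕ) : Type :=
  Monoid.Coprod (Multiplicative (ZMod (2*k+1))) (Multiplicative (ZMod 2))

theorem inl_pow_eq_one (k : ℕ) :
    (Coprod.inl (Multiplicative.ofAdd (1 : ZMod (2*k+1))) : QQ k) ^ (2*k+1) = 1 := by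
  rw [← map_pow, ← ofAdd_nsmul, nsmul_eq_mul, mul_one, ZMod.natCast_self]
  simp

theorem inr_sq_eq_one (k : ℕ) :
    (Coprod.inr (Multiplicative.ofAdd (1 : ZMod 2)) : QQ k) ^ 2 = 1 := by
  rw [← map_pow, ← ofAdd_nsmul, nsmul_eq_mul, mul_one, ZMod.natCast_self]
  simp

/-- The projection `⟨x,y ∣ xᵐ = y²⟩ → ℤ/m * ℤ/2`. -/
noncomputable def pGQ (k : ℕ) : GG (2*k+1) →* QQ k :=
  PresentedGroup.toGroup
    (f := fun v => bif v
      then (Coprod.inr (Multiplicative.ofAdd (1 : ZMod 2)) : QQ k)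
      else (Coprod.inl (Multiplicative.ofAdd (1 : ZMod (2*k+1))) : QQ k))
    (by
      rintro r hr
      rw [grels, Set.mem_singleton_iff] at hr
      subst hr
      rw [map_mul, map_inv, map_pow, map_pow, FreeGroup.lift_apply_of, FreeGroup.lift_apply_of]
      show (Coprod.inl (Multiplicative.ofAdd (1 : ZMod (2*k+1))) : QQ k) ^ (2*k+1)
        * (((Coprod.inr (Multiplicative.ofAdd (1 : ZMod 2)) : QQ k)) ^ 2)⁻¹ = 1
      rw [inl_pow_eq_one, inr_sq_eq_one]
      simp)

theorem pGQ_X (k : ℕ) : pGQ k (PresentedGroup.of false)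
    = Coprod.inl (Multiplicative.ofAdd (1 : ZMod (2*k+1))) :=
  PresentedGroup.toGroup.of _

theorem pGQ_Y (k : ℕ) : pGQ k (PresentedGroup.of true)
    = Coprod.inr (Multiplicative.ofAdd (1 : ZMod 2)) :=
  PresentedGroup.toGroup.of _

theorem pGQ_surjective (k : ℕ) : Function.Surjective (pGQ k) := by
  intro x
  induction x using Coprod.induction_on with
  | inl a =>
    obtain ⟨z, hz⟩ := ZMod.intCast_surjective (n := 2*k+1) a.toAdd
    refine ⟨PresentedGroup.of false ^ z, ?_⟩
    rw [map_zpow, pGQ_X, ← map_zpow]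
    congr 1
    rw [← ofAdd_zsmul, zsmul_eq_mul, mul_one, hz, ofAdd_toAdd]
  | inr b =>
    obtain ⟨z, hz⟩ := ZMod.intCast_surjective (n := 2) b.toAdd
    refine ⟨PresentedGroup.of true ^ z, ?_⟩
    rw [map_zpow, pGQ_Y, ← map_zpow]
    congr 1
    rw [← ofAdd_zsmul, zsmul_eq_mul, mul_one, hz, ofAdd_toAdd]
  | mul x y hx hy =>
    obtain ⟨g1, rfl⟩ := hx
    obtain ⟨g2, rfl⟩ := hy
    exact ⟨g1 * g2, map_mul _ _ _⟩

theorem Xm_central (k : ℕ) :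
    (PresentedGroup.of false : GG (2*k+1)) ^ (2*k+1) ∈ Subgroup.center (GG (2*k+1)) := by
  rw [Subgroup.mem_center_iff]
  intro g
  have hg : g ∈ Subgroup.centralizer {(PresentedGroup.of false : GG (2*k+1)) ^ (2*k+1)} := by
    apply PresentedGroup.generated_by
    intro j
    rw [Subgroup.mem_centralizer_singleton_iff]
    cases j
    · group
    · rw [GG_rel]
      group
  exact Subgroup.mem_centralizer_singleton_iff.mp hg

theorem center_QQ (k : ℕ) (hk : 1 ≤ k) : Subgroup.center (QQ k) = ⊥ := by
  apply center_eq_bot_of_mulEquiv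
    (coprodEquivCoprodI (Multiplicative (ZMod (2*k+1))) (Multiplicative (ZMod 2)))
  haveI : Fact (1 < 2) := ⟨by omega⟩
  haveI : Nontrivial (pairFam (Multiplicative (ZMod (2*k+1))) (Multiplicative (ZMod 2)) true) :=
    inferInstanceAs (Nontrivial (Multiplicative (ZMod 2)))
  refine coprodI_bool_center_eq_bot _ ?_
  show ∀ a : Multiplicative (ZMod (2*k+1)), ∃ x : Multiplicative (ZMod (2*k+1)),
    x ≠ 1 ∧ a * x ≠ 1
  intro a
  haveI : NeZero (2*k+1) := ⟨by omega⟩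
  have h1 : ((1 : ℕ) : ZMod (2*k+1)) ≠ 0 := by
    rw [Ne, ZMod.natCast_eq_zero_iff]
    intro h
    have := Nat.le_of_dvd one_pos h
    omega
  have h2 : ((2 : ℕ) : ZMod (2*k+1)) ≠ 0 := by
    rw [Ne, ZMod.natCast_eq_zero_iff]
    intro h
    have := Nat.le_of_dvd (by omega) h
    omega
  by_cases hc : a.toAdd + ((1 : ℕ) : ZMod (2*k+1)) = 0
  · refine ⟨Multiplicative.ofAdd ((2 : ℕ) : ZMod (2*k+1)), ?_, ?_⟩
    · rw [Ne, ofAdd_eq_one]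
      exact h2
    · intro h
      have h' : a.toAdd + ((2 : ℕ) : ZMod (2*k+1)) = 0 := by
        have := congrArg Multiplicative.toAdd h
        simpa using this
      have : ((1 : ℕ) : ZMod (2*k+1)) = 0 := by
        push_cast at hc h' ⊢
        linear_combination h' - hc
      exact h1 this
  · refine ⟨Multiplicative.ofAdd ((1 : ℕ) : ZMod (2*k+1)), ?_, ?_⟩
    · rw [Ne, ofAdd_eq_one]
      exact h1
    · intro h
      apply hc
      have := congrArg Multiplicative.toAdd h
      simpa using this

theorem center_eq_ker (k : ℕ) (hk : 1 ≤ k) :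
    Subgroup.center (GG (2*k+1)) = MonoidHom.ker (pGQ k) := by
  haveI : NeZero (2*k+1) := ⟨by omega⟩
  set N := Subgroup.normalClosure
    ({(PresentedGroup.of false : GG (2*k+1)) ^ (2*k+1)} : Set (GG (2*k+1))) with hN
  have hqx : ((QuotientGroup.mk' N) (PresentedGroup.of false)) ^ (2*k+1) = 1 := by
    rw [← map_pow]
    rw [QuotientGroup.mk'_apply, QuotientGroup.eq_one_iff]
    exact Subgroup.subset_normalClosure rfl
  have hqy : ((QuotientGroup.mk' N) (PresentedGroup.of true)) ^ 2 = 1 := by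
    rw [← map_pow, ← GG_rel, map_pow]
    exact hqx
  set ρ : QQ k →* GG (2*k+1) ⧸ N :=
    Coprod.lift (zmodHom (2*k+1) _ hqx) (zmodHom 2 _ hqy) with hρ
  have hcompat : ∀ g, ρ (pGQ k g) = QuotientGroup.mk' N g := by
    have : ρ.comp (pGQ k) = QuotientGroup.mk' N := by
      apply PresentedGroup.ext
      intro x
      cases x
      · show ρ (pGQ k (PresentedGroup.of false)) = _
        rw [pGQ_X, hρ]
        rw [show (1 : ZMod (2*k+1)) = (((1 : ℤ) : ZMod (2*k+1))) by push_cast; ring]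
        rw [Coprod.lift_apply_inl, zmodHom_intCast]
        simp
      · show ρ (pGQ k (PresentedGroup.of true)) = _
        rw [pGQ_Y, hρ]
        rw [show (1 : ZMod 2) = (((1 : ℤ) : ZMod 2)) by push_cast; ring]
        rw [Coprod.lift_apply_inr, zmodHom_intCast]
        simp
    intro g
    rw [← this, MonoidHom.comp_apply]
  apply le_antisymm
  · intro g hg
    rw [MonoidHom.mem_ker]
    have hcen : pGQ k g ∈ Subgroup.center (QQ k) := by
      rw [Subgroup.mem_center_iff]
      intro x
      obtain ⟨y, rfl⟩ := pGQ_surjective k x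
      rw [← map_mul, ← map_mul, Subgroup.mem_center_iff.mp hg y]
    rw [center_QQ k hk, Subgroup.mem_bot] at hcen
    exact hcen
  · intro g hg
    rw [MonoidHom.mem_ker] at hg
    have hq1 : (QuotientGroup.mk' N) g = 1 := by
      rw [← hcompat, hg, map_one]
    have hmem : g ∈ N := by
      rw [← QuotientGroup.ker_mk' N, MonoidHom.mem_ker]
      exact hq1
    exact Subgroup.normalClosure_le_normal
      (Set.singleton_subset_iff.mpr (Xm_central k)) hmem

end Stmt8

/-- For odd m ≥ 3, the central quotient of the dihedral Artin–Tits
group A_m is isomorphic to ℤ/mℤ * ℤ/2ℤ. -/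
theorem stmt_8 (m : ℕ) (hm : 3 ≤ m) (hodd : Odd m) :
    Nonempty ((ArtinGroup (dihedralLabel m) ⧸
        Subgroup.center (ArtinGroup (dihedralLabel m))) ≃*
      Monoid.Coprod (Multiplicative (ZMod m)) (Multiplicative (ZMod 2))) := by
  obtain ⟨k, rfl⟩ := hodd
  have hk : 1 ≤ k := by omega
  have e1 := Stmt8.eAG k hk
  have e2 : (Stmt8.GG (2*k+1) ⧸ Subgroup.center (Stmt8.GG (2*k+1))) ≃* Stmt8.QQ k :=
    (QuotientGroup.quotientMulEquivOfEq (Stmt8.center_eq_ker k hk)).trans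
      (QuotientGroup.quotientKerEquivOfSurjective _ (Stmt8.pGQ_surjective k))
  have e3 := QuotientGroup.congr (Subgroup.center (ArtinGroup (dihedralLabel (2*k+1))))
      (Subgroup.center (Stmt8.GG (2*k+1))) e1 (map_center_mulEquiv e1)
  exact ⟨e3.trans e2⟩
end

section
/- For even m ≥ 4, the quotient of the dihedral Artin–Tits group A_m = ⟨s, t | stst⋯ = tsts⋯ (both sides of length m)⟩ by its center is isomorphic to the free product ℤ/(m/2)ℤ * ℤ. -/
open Monoid Monoid.CoprodI

namespace CenterAux

variable {ι : Type*} [DecidableEq ι] {M : ι → Type*} [∀ i, Group (M i)] [∀ i, DecidableEq (M i)]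

theorem prod_injective : Function.Injective (Word.prod : Word M → CoprodI M) :=
  fun _ _ h => Word.equiv.symm.injective h

theorem center_coprodI_eq_bot
    (hn : ∀ i : ι, ∃ j, j ≠ i ∧ Nontrivial (M j)) :
    Subgroup.center (CoprodI M) = ⊥ := by
  rw [eq_bot_iff]
  intro g hg
  rw [Subgroup.mem_bot]
  have hcomm : ∀ u : CoprodI M, u * g = g * u := fun u => (Subgroup.mem_center_iff.mp hg) u
  set w : Word M := Word.equiv g with hw
  have hgw : Word.prod w = g := Word.equiv.symm_apply_apply g
  rcases hL : w.toList with _ | ⟨⟨i, x₁⟩, tl⟩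
  · have : w = Word.empty := Word.ext hL
    rw [← hgw, this, Word.prod_empty]
  · exfalso
    have hx₁ : x₁ ≠ 1 := w.ne_one ⟨i, x₁⟩ (by rw [hL]; exact List.mem_cons_self)
    have hchain : List.Chain' (fun l l' : Σ i, M i => l.fst ≠ l'.fst) (⟨i, x₁⟩ :: tl) := by
      rw [← hL]; exact w.chain_ne
    have hne_one : ∀ l ∈ (⟨i, x₁⟩ :: tl : List (Σ i, M i)), l.snd ≠ 1 := by
      rw [← hL]; exact w.ne_one
    set T : CoprodI M := List.prod (tl.map fun l => of l.snd) with hT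
    have hgT : g = of x₁ * T := by
      rw [← hgw]; unfold Word.prod; rw [hL]; simp [hT]
    set last := (⟨i, x₁⟩ :: tl : List (Σ i, M i)).getLast (List.cons_ne_nil _ _) with hlast
    have hlast? : (⟨i, x₁⟩ :: tl : List (Σ i, M i)).getLast? = some last :=
      List.getLast?_eq_getLast _
    by_cases hij : last.fst = i
    · -- head and last have the same index `i`; pick a letter from another factor
      obtain ⟨i', hi'ne, hnt⟩ := hn i
      haveI := hnt
      obtain ⟨c, hc⟩ := exists_ne (1 : M i')
      have hw₁chain : List.IsChain (fun l l' : Σ i, M i => l.fst ≠ l'.fst)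
          ((⟨i, x₁⟩ :: tl) ++ [⟨i', c⟩]) := by
        rw [List.isChain_append]
        refine ⟨hchain, List.isChain_singleton _, ?_⟩
        intro x hx y hy
        rw [hlast?, Option.mem_some_iff] at hx
        simp only [List.head?_cons, Option.mem_some_iff] at hy
        subst hx; subst hy
        rw [hij]
        exact fun h => hi'ne h.symm
      set w₁ : Word M :=
        { toList := (⟨i, x₁⟩ :: tl) ++ [⟨i', c⟩]
          ne_one := by
            intro l hl
            rcases List.mem_append.mp hl with h | h
            · exact hne_one l h
            · simp only [List.mem_singleton] at h
              subst h; exact hc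
          chain_ne := hw₁chain } with hw₁
      set w₂ : Word M :=
        { toList := ⟨i', c⟩ :: ⟨i, x₁⟩ :: tl
          ne_one := by
            intro l hl
            rcases List.mem_cons.mp hl with h | h
            · subst h; exact hc
            · exact hne_one l h
          chain_ne := List.isChain_cons_cons.mpr ⟨hi'ne, hchain⟩ } with hw₂
      have hp₁ : w₁.prod = g * of c := by
        unfold Word.prod
        rw [hw₁]
        simp [hgT, mul_assoc, hT]
      have hp₂ : w₂.prod = of c * g := by
        unfold Word.prod
        rw [hw₂]
        simp [hgT, mul_assoc, hT]
      have heq : w₁ = w₂ := prod_injective (by rw [hp₁, hp₂, hcomm])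
      have : ((⟨i, x₁⟩ :: tl) ++ [⟨i', c⟩] : List (Σ i, M i)) = ⟨i', c⟩ :: ⟨i, x₁⟩ :: tl :=
        congrArg Word.toList heq
      rw [List.cons_append] at this
      have hhead : (⟨i, x₁⟩ : Σ i, M i) = ⟨i', c⟩ := (List.cons.injEq _ _ _ _).mp this |>.1
      exact hi'ne (congrArg Sigma.fst hhead).symm
    · -- head index ≠ last index; use the head letter itself
      have hw₁chain : List.IsChain (fun l l' : Σ i, M i => l.fst ≠ l'.fst)
          ((⟨i, x₁⟩ :: tl) ++ [⟨i, x₁⟩]) := by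
        rw [List.isChain_append]
        refine ⟨hchain, List.isChain_singleton _, ?_⟩
        intro x hx y hy
        rw [hlast?, Option.mem_some_iff] at hx
        simp only [List.head?_cons, Option.mem_some_iff] at hy
        subst hx; subst hy
        exact hij
      set w₁ : Word M :=
        { toList := (⟨i, x₁⟩ :: tl) ++ [⟨i, x₁⟩]
          ne_one := by
            intro l hl
            rcases List.mem_append.mp hl with h | h
            · exact hne_one l h
            · simp only [List.mem_singleton] at h
              subst h; exact hx₁
          chain_ne := hw₁chain } with hw₁
      have hp₁ : w₁.prod = g * of x₁ := by
        unfold Word.prod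
        rw [hw₁]
        simp [hgT, mul_assoc, hT]
      by_cases hxx : x₁ * x₁ = 1
      · set w₂ : Word M :=
          { toList := tl
            ne_one := fun l hl => hne_one l (List.mem_cons_of_mem _ hl)
            chain_ne := hchain.tail } with hw₂
        have hp₂ : w₂.prod = of x₁ * g := by
          unfold Word.prod
          rw [hw₂, hgT, ← mul_assoc, ← map_mul, hxx, map_one, one_mul]
        have heq : w₁ = w₂ := prod_injective (by rw [hp₁, hp₂, hcomm])
        have hlen := congrArg (fun u : Word M => u.toList.length) heq
        simp [hw₁, hw₂] at hlen
        omega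
      · set w₂ : Word M :=
          { toList := ⟨i, x₁ * x₁⟩ :: tl
            ne_one := by
              intro l hl
              rcases List.mem_cons.mp hl with h | h
              · subst h; exact hxx
              · exact hne_one l (List.mem_cons_of_mem _ h)
            chain_ne := List.isChain_cons.mpr (List.isChain_cons.mp hchain) } with hw₂
        have hp₂ : w₂.prod = of x₁ * g := by
          unfold Word.prod
          rw [hw₂, hgT]
          simp [mul_assoc, hT]
        have heq : w₁ = w₂ := prod_injective (by rw [hp₁, hp₂, hcomm])
        have hlen := congrArg (fun u : Word M => u.toList.length) heq
        simp [hw₁, hw₂] at hlen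

section Part2

variable (H K : Type) [Group H] [Group K]

/-- The Bool-indexed family for the binary coproduct. -/
abbrev F2 : Bool → Type := fun b => cond b H K

instance F2.group : ∀ b, Group (F2 H K b) := fun b => by cases b <;> (dsimp [F2]; infer_instance)

instance F2.deceq [DecidableEq H] [DecidableEq K] : ∀ b, DecidableEq (F2 H K b) := fun b => by
  cases b <;> (dsimp [F2]; infer_instance)

/-- The component maps from the family to the binary coproduct. -/
def thetaFun : ∀ b, F2 H K b →* Monoid.Coprod H K := fun b =>
  Bool.rec (motive := fun b => F2 H K b →* Monoid.Coprod H K) (Coprod.inr) (Coprod.inl) b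

/-- From CoprodI to Coprod. -/
def theta : CoprodI (F2 H K) →* Monoid.Coprod H K :=
  CoprodI.lift (thetaFun H K)

/-- From Coprod to CoprodI. -/
def theta' : Monoid.Coprod H K →* CoprodI (F2 H K) :=
  Coprod.lift (CoprodI.of (M := F2 H K) (i := true)) (CoprodI.of (M := F2 H K) (i := false))

theorem theta_theta' : (theta H K).comp (theta' H K) = MonoidHom.id _ := by
  apply Coprod.hom_ext
  · ext x
    show theta H K (CoprodI.of (M := F2 H K) (i := true) x) = Coprod.inl x
    exact CoprodI.lift_of (thetaFun H K) (i := true) x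
  · ext x
    show theta H K (CoprodI.of (M := F2 H K) (i := false) x) = Coprod.inr x
    exact CoprodI.lift_of (thetaFun H K) (i := false) x

theorem theta'_theta : (theta' H K).comp (theta H K) = MonoidHom.id _ := by
  apply CoprodI.ext_hom
  intro i
  cases i
  · ext x
    show theta' H K (theta H K (CoprodI.of x)) = CoprodI.of x
    rw [theta, CoprodI.lift_of (thetaFun H K) (i := false) x]
    exact rfl
  · ext x
    show theta' H K (theta H K (CoprodI.of x)) = CoprodI.of x
    rw [theta, CoprodI.lift_of (thetaFun H K) (i := true) x]
    exact rfl

/-- The iso between the two coproducts. -/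
def coprodEquiv : CoprodI (F2 H K) ≃* Monoid.Coprod H K :=
  MonoidHom.toMulEquiv (theta H K) (theta' H K) (theta'_theta H K) (theta_theta' H K)

theorem center_eq_bot_transfer {G₁ G₂ : Type*} [Group G₁] [Group G₂] (e : G₁ ≃* G₂)
    (h : Subgroup.center G₁ = ⊥) : Subgroup.center G₂ = ⊥ := by
  rw [eq_bot_iff]
  intro g hg
  rw [Subgroup.mem_bot]
  have h1 : e.symm g ∈ Subgroup.center G₁ := by
    rw [Subgroup.mem_center_iff]
    intro u
    apply e.injective
    rw [map_mul, map_mul, e.apply_symm_apply]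
    exact Subgroup.mem_center_iff.mp hg (e u)
  rw [h, Subgroup.mem_bot] at h1
  have := congrArg e h1
  rwa [e.apply_symm_apply, map_one] at this

theorem center_coprod_eq_bot [Nontrivial H] [Nontrivial K] [DecidableEq H] [DecidableEq K] :
    Subgroup.center (Monoid.Coprod H K) = ⊥ := by
  apply center_eq_bot_transfer (coprodEquiv H K)
  apply center_coprodI_eq_bot
  intro b
  cases b
  · exact ⟨true, by simp, by dsimp [F2]; infer_instance⟩
  · exact ⟨false, by simp, by dsimp [F2]; infer_instance⟩

end Part2

end CenterAux

section Part3

open Multiplicative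

/-- Mapping an alternating word of even length through a homomorphism. -/
theorem map_altWord_even {V : Type} {G : Type*} [Group G] (F : FreeGroup V →* G) (s t : V) :
    ∀ kk : ℕ, F (altWord s t (2 * kk)) = (F (.of s) * F (.of t)) ^ kk
  | 0 => by
    show F (altWord s t 0) = _
    simp [altWord]
  | (kk + 1) => by
    have h2 : 2 * (kk + 1) = (2 * kk) + 2 := by ring
    rw [h2]
    have h3 : altWord s t (2 * kk + 2) =
        FreeGroup.of s * (FreeGroup.of t * altWord s t (2 * kk)) := rfl
    rw [h3, map_mul, map_mul, map_altWord_even F s t kk, pow_succ', mul_assoc]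

namespace CenterAux

variable (k : ℕ)

local notation "Ak" => ArtinGroup (dihedralLabel (2 * k))
local notation "Gk" => Monoid.Coprod (Multiplicative (ZMod k)) (Multiplicative ℤ)

def aG : Gk := Coprod.inl (ofAdd (1 : ZMod k))
def bG : Gk := Coprod.inr (ofAdd (1 : ℤ))

def fgen : Bool → Gk := fun s => cond s (bG k) ((bG k)⁻¹ * aG k)

lemma aG_pow : (aG k) ^ k = 1 := by
  rw [aG, ← map_pow, ← ofAdd_nsmul]
  have : k • (1 : ZMod k) = 0 := by
    rw [nsmul_eq_mul, mul_one, ZMod.natCast_self]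
  rw [this, ofAdd_zero, map_one]

lemma key_pow_true : (fgen k true * fgen k false) ^ k = 1 := by
  have h : fgen k true * fgen k false = aG k := by
    show bG k * ((bG k)⁻¹ * aG k) = aG k
    rw [mul_inv_cancel_left]
  rw [h, aG_pow]

lemma key_pow_false : (fgen k false * fgen k true) ^ k = 1 := by
  have h : fgen k false * fgen k true = (bG k)⁻¹ * aG k * ((bG k)⁻¹)⁻¹ := by
    show (bG k)⁻¹ * aG k * bG k = _
    rw [inv_inv]
  rw [h, conj_pow, aG_pow, mul_one, inv_inv, inv_mul_cancel]

lemma hrels : ∀ r ∈ artinRels (dihedralLabel (2 * k)), FreeGroup.lift (fgen k) r = 1 := by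
  rintro r ⟨s, t, hst, rfl⟩
  have hne : s ≠ t := by
    rintro rfl
    simp [dihedralLabel] at hst
  have hlab : dihedralLabel (2 * k) s t = 2 * k := by
    simp [dihedralLabel, hne]
  rw [hlab, map_mul, map_inv, map_altWord_even _ s t k, map_altWord_even _ t s k]
  simp only [FreeGroup.lift_apply_of]
  rw [mul_inv_eq_one]
  cases s <;> cases t
  · exact absurd rfl hne
  · rw [key_pow_false, key_pow_true]
  · rw [key_pow_true, key_pow_false]
  · exact absurd rfl hne

def phi : Ak →* Gk := PresentedGroup.toGroup (hrels k)

lemma phi_of_true : phi k (PresentedGroup.of true) = bG k := PresentedGroup.toGroup.of _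
lemma phi_of_false : phi k (PresentedGroup.of false) = (bG k)⁻¹ * aG k :=
  PresentedGroup.toGroup.of _

def zA : Ak := (PresentedGroup.of true * PresentedGroup.of false) ^ k

lemma relA (hk : 2 ≤ k) :
    ((PresentedGroup.of (rels := artinRels (dihedralLabel (2 * k))) true *
        PresentedGroup.of false) ^ k : Ak) =
      (PresentedGroup.of false * PresentedGroup.of true) ^ k := by
  have hmem : altWord true false (2 * k) * (altWord false true (2 * k))⁻¹ ∈
      artinRels (dihedralLabel (2 * k)) := by
    refine ⟨true, false, ?_, ?_⟩ <;> simp [dihedralLabel] <;> omega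
  have h1 : PresentedGroup.mk (artinRels (dihedralLabel (2 * k)))
      (altWord true false (2 * k) * (altWord false true (2 * k))⁻¹) = 1 :=
    (QuotientGroup.eq_one_iff _).mpr (Subgroup.subset_normalClosure hmem)
  rw [map_mul, map_inv, mul_inv_eq_one] at h1
  have h2 := h1
  rw [map_altWord_even _ true false k, map_altWord_even _ false true k] at h2
  exact h2

lemma zA_central (hk : 2 ≤ k) : zA k ∈ Subgroup.center Ak := by
  rw [Subgroup.mem_center_iff]
  intro g
  have hg : g ∈ Subgroup.centralizer {zA k} := by
    refine PresentedGroup.generated_by _ _ ?_ g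
    intro j
    rw [Subgroup.mem_centralizer_iff]
    rintro h hh
    rw [Set.mem_singleton_iff] at hh
    subst hh
    cases j
    · -- t = of false
      have hsc : SemiconjBy (PresentedGroup.of (rels := artinRels (dihedralLabel (2 * k))) false)
          ((PresentedGroup.of true * PresentedGroup.of false))
          ((PresentedGroup.of false * PresentedGroup.of true)) := by
        unfold SemiconjBy; rw [mul_assoc]
      have h := hsc.pow_right k
      show zA k * PresentedGroup.of false = PresentedGroup.of false * zA k
      rw [zA]
      calc (PresentedGroup.of true * PresentedGroup.of false) ^ k * PresentedGroup.of false
          = (PresentedGroup.of false * PresentedGroup.of true) ^ k *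
              PresentedGroup.of false := by rw [relA k hk]
        _ = PresentedGroup.of false *
              (PresentedGroup.of true * PresentedGroup.of false) ^ k := h.eq.symm
    · -- s = of true
      have hsc : SemiconjBy (PresentedGroup.of (rels := artinRels (dihedralLabel (2 * k))) true)
          ((PresentedGroup.of false * PresentedGroup.of true))
          ((PresentedGroup.of true * PresentedGroup.of false)) := by
        unfold SemiconjBy; rw [mul_assoc]
      have h := hsc.pow_right k
      show zA k * PresentedGroup.of true = PresentedGroup.of true * zA k
      rw [zA]
      calc (PresentedGroup.of true * PresentedGroup.of false) ^ k * PresentedGroup.of true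
          = PresentedGroup.of true *
              (PresentedGroup.of false * PresentedGroup.of true) ^ k := h.eq.symm
        _ = PresentedGroup.of true *
              (PresentedGroup.of true * PresentedGroup.of false) ^ k := by rw [relA k hk]
  have := Subgroup.mem_centralizer_iff.mp hg (zA k) (Set.mem_singleton _)
  exact this.symm

def NA : Subgroup Ak := Subgroup.normalClosure {zA k}

instance : (NA k).Normal := Subgroup.normalClosure_normal

lemma N_le_center (hk : 2 ≤ k) : NA k ≤ Subgroup.center Ak :=
  Subgroup.normalClosure_le_normal
    (by rw [Set.singleton_subset_iff]; exact zA_central k hk)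

lemma phi_z : phi k (zA k) = 1 := by
  rw [zA, map_pow, map_mul, phi_of_true, phi_of_false, mul_inv_cancel_left, aG_pow]

lemma N_le_ker : NA k ≤ (phi k).ker :=
  Subgroup.normalClosure_le_normal
    (by rw [Set.singleton_subset_iff]; exact MonoidHom.mem_ker.mpr (phi_z k))

def pQ : Ak →* (Ak ⧸ NA k) := QuotientGroup.mk' (NA k)

def phibar : (Ak ⧸ NA k) →* Gk :=
  QuotientGroup.lift (NA k) (phi k) (fun _ hn => MonoidHom.mem_ker.mp (N_le_ker k hn))

lemma phibar_pQ (a : Ak) : phibar k (pQ k a) = phi k a := rfl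

def xQ : Ak ⧸ NA k := pQ k (PresentedGroup.of true * PresentedGroup.of false)
def yQ : Ak ⧸ NA k := pQ k (PresentedGroup.of true)

lemma xQ_pow : (xQ k) ^ k = 1 := by
  rw [xQ, ← map_pow]
  exact (QuotientGroup.eq_one_iff _).mpr
    (Subgroup.subset_normalClosure (Set.mem_singleton _))

def xQhom : ZMod k →+ Additive (Ak ⧸ NA k) :=
  ZMod.lift k ⟨zmultiplesHom (Additive (Ak ⧸ NA k)) (Additive.ofMul (xQ k)), by
    show ((k : ℤ)) • Additive.ofMul (xQ k) = 0
    rw [← ofMul_zpow, zpow_natCast, xQ_pow]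
    rfl⟩

def sigma1 : Multiplicative (ZMod k) →* (Ak ⧸ NA k) :=
  AddMonoidHom.toMultiplicativeLeft (xQhom k)

lemma sigma1_one : sigma1 k (ofAdd (1 : ZMod k)) = xQ k := by
  show Additive.toMul (xQhom k (1 : ZMod k)) = xQ k
  have h1 : ((1 : ℤ) : ZMod k) = 1 := Int.cast_one
  rw [xQhom, ← h1, ZMod.lift_coe]
  show Additive.toMul ((1 : ℤ) • Additive.ofMul (xQ k)) = xQ k
  rw [one_zsmul]
  rfl

def sigma2 : Multiplicative ℤ →* (Ak ⧸ NA k) := zpowersHom _ (yQ k)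

lemma sigma2_one : sigma2 k (ofAdd (1 : ℤ)) = yQ k := by
  show (yQ k) ^ ((ofAdd (1 : ℤ)).toAdd) = yQ k
  simp

def sigma : Gk →* (Ak ⧸ NA k) := Coprod.lift (sigma1 k) (sigma2 k)

lemma zmod_hom_ext {P : Type*} [Monoid P] (hk : 2 ≤ k)
    {F F' : Multiplicative (ZMod k) →* P}
    (h : F (ofAdd (1 : ZMod k)) = F' (ofAdd (1 : ZMod k))) : F = F' := by
  haveI : NeZero k := ⟨by omega⟩
  refine MonoidHom.ext fun c => ?_
  have hc : c = (ofAdd (1 : ZMod k)) ^ (Multiplicative.toAdd c : ZMod k).val := by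
    rw [← ofAdd_nsmul]
    have : (Multiplicative.toAdd c : ZMod k).val • (1 : ZMod k) = Multiplicative.toAdd c := by
      rw [nsmul_eq_mul, mul_one, ZMod.natCast_val, ZMod.cast_id]
    rw [this]
    rfl
  rw [hc, map_pow, map_pow, h]

lemma phibar_sigma (hk : 2 ≤ k) :
    (phibar k).comp (sigma k) = MonoidHom.id Gk := by
  apply Coprod.hom_ext
  · apply zmod_hom_ext k hk
    show phibar k (sigma k (Coprod.inl (ofAdd (1 : ZMod k)))) = Coprod.inl (ofAdd (1 : ZMod k))
    rw [sigma, Coprod.lift_apply_inl, sigma1_one, xQ, phibar_pQ, map_mul,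
      phi_of_true, phi_of_false, mul_inv_cancel_left]
    rfl
  · apply MonoidHom.ext_mint
    show phibar k (sigma k (Coprod.inr (ofAdd (1 : ℤ)))) = Coprod.inr (ofAdd (1 : ℤ))
    rw [sigma, Coprod.lift_apply_inr, sigma2_one, yQ, phibar_pQ, phi_of_true]
    rfl

lemma sigma_phibar :
    (sigma k).comp (phibar k) = MonoidHom.id (Ak ⧸ NA k) := by
  have h : ((sigma k).comp (phibar k)).comp (pQ k) = (MonoidHom.id _).comp (pQ k) := by
    apply PresentedGroup.ext
    intro x
    cases x
    · show sigma k (phibar k (pQ k (PresentedGroup.of false))) = pQ k (PresentedGroup.of false)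
      rw [phibar_pQ, phi_of_false, map_mul, map_inv]
      have h1 : sigma k (bG k) = yQ k := by
        rw [bG, sigma, Coprod.lift_apply_inr, sigma2_one]
      have h2 : sigma k (aG k) = xQ k := by
        rw [aG, sigma, Coprod.lift_apply_inl, sigma1_one]
      rw [h1, h2, yQ, xQ, ← map_inv, ← map_mul, inv_mul_cancel_left]
    · show sigma k (phibar k (pQ k (PresentedGroup.of true))) = pQ k (PresentedGroup.of true)
      rw [phibar_pQ, phi_of_true]
      rw [show sigma k (bG k) = yQ k from by rw [bG, sigma, Coprod.lift_apply_inr, sigma2_one]]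
      rfl
  refine MonoidHom.ext fun q => ?_
  refine QuotientGroup.induction_on q fun a => ?_
  exact DFunLike.congr_fun h a

def eQG (hk : 2 ≤ k) : (Ak ⧸ NA k) ≃* Gk :=
  MonoidHom.toMulEquiv (phibar k) (sigma k) (sigma_phibar k) (phibar_sigma k hk)

lemma ker_phi (hk : 2 ≤ k) : (phi k).ker = NA k := by
  apply le_antisymm
  · intro a ha
    have h1 : phibar k (pQ k a) = 1 := by
      rw [phibar_pQ]; exact MonoidHom.mem_ker.mp ha
    have h2 : pQ k a = 1 := by
      apply (eQG k hk).injective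
      rw [map_one]
      exact h1
    exact (QuotientGroup.eq_one_iff _).mp h2
  · exact N_le_ker k

lemma phi_surj (hk : 2 ≤ k) : Function.Surjective (phi k) := by
  intro u
  obtain ⟨q, hq⟩ := (eQG k hk).surjective u
  obtain ⟨a, rfl⟩ := QuotientGroup.mk'_surjective (NA k) q
  exact ⟨a, by rw [← hq]; rfl⟩

lemma center_eq (hk : 2 ≤ k) : Subgroup.center Ak = NA k := by
  apply le_antisymm
  · intro c hc
    rw [← ker_phi k hk, MonoidHom.mem_ker]
    haveI : Fact (1 < k) := ⟨by omega⟩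
    have hZ : phi k c ∈ Subgroup.center Gk := by
      rw [Subgroup.mem_center_iff]
      intro u
      obtain ⟨v, rfl⟩ := phi_surj k hk u
      rw [← map_mul, ← map_mul, Subgroup.mem_center_iff.mp hc v]
    rwa [center_coprod_eq_bot, Subgroup.mem_bot] at hZ
  · exact N_le_center k hk

theorem main_aux (hk : 2 ≤ k) :
    Nonempty ((ArtinGroup (dihedralLabel (2 * k)) ⧸
        Subgroup.center (ArtinGroup (dihedralLabel (2 * k)))) ≃*
      Monoid.Coprod (Multiplicative (ZMod k)) (Multiplicative ℤ)) :=
  ⟨(QuotientGroup.quotientMulEquivOfEq (center_eq k hk)).trans (eQG k hk)⟩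

end CenterAux

end Part3

/-- For even m ≥ 4, the central quotient of the dihedral Artin–Tits
group A_m is isomorphic to ℤ/(m/2)ℤ * ℤ. -/
theorem stmt_9 (m : ℕ) (hm : 4 ≤ m) (heven : Even m) :
    Nonempty ((ArtinGroup (dihedralLabel m) ⧸
        Subgroup.center (ArtinGroup (dihedralLabel m))) ≃*
      Monoid.Coprod (Multiplicative (ZMod (m / 2))) (Multiplicative ℤ)) := by
  obtain ⟨r, hr⟩ := heven
  have hm2 : m = 2 * (m / 2) := by omega
  rw [hm2]
  have : (2 * (m / 2)) / 2 = m / 2 := by omega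
  rw [this]
  exact CenterAux.main_aux (m / 2) (by omega)
end
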